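/- Let s_n denote the number of independent dominating sets of the ortho-chain square cactus S_n. Then for every n ≥ 1, s_n = 2ⁿ. -/
import Mathlib


/-- `S` is an independent dominating set of `G`: pairwise non-adjacent, and every
vertex outside `S` has a neighbour in `S`. -/
def IsIndepDomSet {V : Type*} (G : SimpleGraph V) (S : Finset V) : Prop :=
  (∀ v ∈ S, ∀ w ∈ S, ¬ G.Adj v w) ∧ ∀ v, v ∉ S → ∃ w ∈ S, G.Adj v w

/-- The ortho-chain square cactus `S n`: `Sum.inl i` is the cut vertex `x i`
(`0 ≤ i ≤ n`), `Sum.inr (Sum.inl k)` is `y (k+1)` and `Sum.inr (Sum.inr k)` is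
`z (k+1)` (`0 ≤ k ≤ n-1`); the `i`-th square (`1 ≤ i ≤ n`) is the four-cycle
`x (i-1) – x i – y i – z i – x (i-1)`. -/
def orthoSq (n : ℕ) : SimpleGraph (Fin (n + 1) ⊕ (Fin n ⊕ Fin n)) :=
  SimpleGraph.fromRel fun p q =>
    match p, q with
    | Sum.inl i, Sum.inl j => (i : ℕ) + 1 = (j : ℕ)
    | Sum.inl i, Sum.inr (Sum.inl k) => (i : ℕ) = (k : ℕ) + 1
    | Sum.inl i, Sum.inr (Sum.inr k) => (i : ℕ) = (k : ℕ)
    | Sum.inr (Sum.inl k), Sum.inr (Sum.inr k') => k = k'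
    | _, _ => False

/-- The number of independent dominating sets of the ortho-chain square cactus `S n`. -/
noncomputable def numIDSOrthoSq (n : ℕ) : ℕ :=
  Nat.card {S : Finset (Fin (n + 1) ⊕ (Fin n ⊕ Fin n)) // IsIndepDomSet (orthoSq n) S}

namespace OrthoAux

abbrev V (n : ℕ) := Fin (n + 1) ⊕ (Fin n ⊕ Fin n)

lemma adj_xx {n} (i j : Fin (n+1)) :
    (orthoSq n).Adj (Sum.inl i) (Sum.inl j) ↔ ((i:ℕ)+1 = j ∨ (j:ℕ)+1 = i) := by
  rw [orthoSq, SimpleGraph.fromRel_adj]; simp [Fin.ext_iff]; omega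

lemma adj_xy {n} (i : Fin (n+1)) (k : Fin n) :
    (orthoSq n).Adj (Sum.inl i) (Sum.inr (Sum.inl k)) ↔ (i:ℕ) = (k:ℕ)+1 := by
  rw [orthoSq, SimpleGraph.fromRel_adj]; simp

lemma adj_xz {n} (i : Fin (n+1)) (k : Fin n) :
    (orthoSq n).Adj (Sum.inl i) (Sum.inr (Sum.inr k)) ↔ (i:ℕ) = (k:ℕ) := by
  rw [orthoSq, SimpleGraph.fromRel_adj]; simp

lemma adj_yz {n} (k k' : Fin n) :
    (orthoSq n).Adj (Sum.inr (Sum.inl k)) (Sum.inr (Sum.inr k')) ↔ k = k' := by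
  rw [orthoSq, SimpleGraph.fromRel_adj]; simp

lemma adj_yy {n} (k k' : Fin n) :
    ¬ (orthoSq n).Adj (Sum.inr (Sum.inl k)) (Sum.inr (Sum.inl k')) := by
  rw [orthoSq, SimpleGraph.fromRel_adj]; simp

lemma adj_zz {n} (k k' : Fin n) :
    ¬ (orthoSq n).Adj (Sum.inr (Sum.inr k)) (Sum.inr (Sum.inr k')) := by
  rw [orthoSq, SimpleGraph.fromRel_adj]; simp

/-- extend `b` to `ℕ` by `false` -/
def ext {n : ℕ} (b : Fin n → Bool) (m : ℕ) : Bool :=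
  if h : m < n then b ⟨m, h⟩ else false

lemma ext_eq {n : ℕ} (b : Fin n → Bool) {m : ℕ} (h : m < n) :
    ext b m = b ⟨m, h⟩ := dif_pos h

/-- membership predicate of the IDS determined by `b` (`b k = true` means `y (k+1)` in). -/
def memB {n : ℕ} (b : Fin n → Bool) : V n → Bool
  | Sum.inl i => ((i : ℕ) == n || ext b i) && ((i : ℕ) == 0 || !ext b ((i : ℕ) - 1))
  | Sum.inr (Sum.inl k) => b k
  | Sum.inr (Sum.inr k) => !b k

def Sset {n : ℕ} (b : Fin n → Bool) : Finset (V n) :=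
  Finset.univ.filter fun v => memB b v = true

lemma mem_Sset {n} (b : Fin n → Bool) (v : V n) : v ∈ Sset b ↔ memB b v = true := by
  simp [Sset]

lemma mem_Sset_x {n} (b : Fin n → Bool) (i : Fin (n+1)) :
    Sum.inl i ∈ Sset b ↔
      ((i:ℕ) = n ∨ ext b i = true) ∧ ((i:ℕ) = 0 ∨ ext b ((i:ℕ)-1) = false) := by
  rw [mem_Sset]; simp [memB]

lemma mem_Sset_y {n} (b : Fin n → Bool) (k : Fin n) :
    Sum.inr (Sum.inl k) ∈ Sset b ↔ b k = true := by
  rw [mem_Sset]; simp [memB]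

lemma mem_Sset_z {n} (b : Fin n → Bool) (k : Fin n) :
    Sum.inr (Sum.inr k) ∈ Sset b ↔ b k = false := by
  rw [mem_Sset]; simp [memB]

/-- helper: no edge between an `x` and a `y` of `Sset b`. -/
lemma not_adj_xy {n : ℕ} {b : Fin n → Bool} {i : Fin (n+1)} {l : Fin n}
    (hv : Sum.inl i ∈ Sset b) (hw : Sum.inr (Sum.inl l) ∈ Sset b) :
    ¬ (orthoSq n).Adj (Sum.inl i) (Sum.inr (Sum.inl l)) := by
  intro hadj
  rw [adj_xy] at hadj
  rw [mem_Sset_x] at hv; rw [mem_Sset_y] at hw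
  have h2 : ext b ((i:ℕ)-1) = false := by rcases hv.2 with h' | h' <;> [omega; exact h']
  rw [show (i:ℕ)-1 = (l:ℕ) by omega, ext_eq b l.isLt] at h2
  simp only [Fin.eta] at h2
  rw [hw] at h2; exact Bool.noConfusion h2

/-- helper: no edge between an `x` and a `z` of `Sset b`. -/
lemma not_adj_xz {n : ℕ} {b : Fin n → Bool} {i : Fin (n+1)} {l : Fin n}
    (hv : Sum.inl i ∈ Sset b) (hw : Sum.inr (Sum.inr l) ∈ Sset b) :
    ¬ (orthoSq n).Adj (Sum.inl i) (Sum.inr (Sum.inr l)) := by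
  intro hadj
  rw [adj_xz] at hadj
  rw [mem_Sset_x] at hv; rw [mem_Sset_z] at hw
  have h1 : ext b i = true := by
    rcases hv.1 with h' | h' <;> [(exact absurd hadj (by omega)); exact h']
  rw [hadj, ext_eq b l.isLt] at h1
  simp only [Fin.eta] at h1
  rw [hw] at h1; exact Bool.noConfusion h1

/-- Every `Sset b` is an independent dominating set. -/
lemma isIDS_Sset {n : ℕ} (b : Fin n → Bool) : IsIndepDomSet (orthoSq n) (Sset b) := by
  constructor
  · rintro (i | k | k) hv (j | l | l) hw hadj
    · rw [adj_xx] at hadj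
      rw [mem_Sset_x] at hv hw
      rcases hadj with h | h
      · have hi : (i:ℕ) < n := by omega
        have h1 : ext b i = true := by rcases hv.1 with h' | h' <;> [omega; exact h']
        have h2 : ext b ((j:ℕ)-1) = false := by rcases hw.2 with h' | h' <;> [omega; exact h']
        rw [show (j:ℕ)-1 = (i:ℕ) by omega] at h2
        rw [h1] at h2; exact Bool.noConfusion h2
      · have hj : (j:ℕ) < n := by omega
        have h1 : ext b j = true := by rcases hw.1 with h' | h' <;> [omega; exact h']
        have h2 : ext b ((i:ℕ)-1) = false := by rcases hv.2 with h' | h' <;> [omega; exact h']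
        rw [show (i:ℕ)-1 = (j:ℕ) by omega] at h2
        rw [h1] at h2; exact Bool.noConfusion h2
    · exact not_adj_xy hv hw hadj
    · exact not_adj_xz hv hw hadj
    · exact not_adj_xy hw hv hadj.symm
    · exact adj_yy k l hadj
    · rw [adj_yz] at hadj; subst hadj
      rw [mem_Sset_y] at hv; rw [mem_Sset_z] at hw
      rw [hv] at hw; exact Bool.noConfusion hw
    · exact not_adj_xz hw hv hadj.symm
    · rw [(orthoSq n).adj_comm, adj_yz] at hadj; subst hadj
      rw [mem_Sset_z] at hv; rw [mem_Sset_y] at hw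
      rw [hw] at hv; exact Bool.noConfusion hv
    · exact adj_zz k l hadj
  · rintro (i | k | k) hv
    · rw [mem_Sset_x] at hv
      push_neg at hv
      rcases Decidable.em (((i:ℕ) = n ∨ ext b i = true)) with h1 | h1
      · have h2 := hv h1
        have hi0 : (i:ℕ) ≠ 0 := h2.1
        have hb : ext b ((i:ℕ)-1) = true := by
          cases hh : ext b ((i:ℕ)-1) with
          | false => exact absurd hh h2.2
          | true => rfl
        have hlt : (i:ℕ)-1 < n := by have := i.isLt; omega
        refine ⟨Sum.inr (Sum.inl ⟨(i:ℕ)-1, hlt⟩), ?_, ?_⟩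
        · rw [mem_Sset_y]; rw [ext_eq b hlt] at hb; exact hb
        · rw [adj_xy]; simp; omega
      · push_neg at h1
        have hlt : (i:ℕ) < n := by have := i.isLt; omega
        refine ⟨Sum.inr (Sum.inr ⟨(i:ℕ), hlt⟩), ?_, ?_⟩
        · rw [mem_Sset_z]
          rw [ext_eq b hlt] at h1
          cases hh : b ⟨(i:ℕ), hlt⟩ with
          | false => rfl
          | true => exact absurd hh h1.2
        · rw [adj_xz]
    · rw [mem_Sset_y] at hv
      refine ⟨Sum.inr (Sum.inr k), ?_, (adj_yz k k).2 rfl⟩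
      rw [mem_Sset_z]; cases hh : b k with
      | false => rfl
      | true => exact absurd hh hv
    · rw [mem_Sset_z] at hv
      refine ⟨Sum.inr (Sum.inl k), ?_, ((adj_yz k k).2 rfl).symm⟩
      rw [mem_Sset_y]; cases hh : b k with
      | false => exact absurd hh hv
      | true => rfl


section Converse

variable {n : ℕ} {S : Finset (V n)} (hS : IsIndepDomSet (orthoSq n) S)

include hS

/-- exactly one of `y k`, `z k` belongs to `S`. -/
lemma z_mem_iff (k : Fin n) :
    Sum.inr (Sum.inr k) ∈ S ↔ Sum.inr (Sum.inl k) ∉ S := by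
  constructor
  · intro hz hy
    exact hS.1 _ hy _ hz ((adj_yz k k).2 rfl)
  · intro hy
    by_contra hz
    obtain ⟨w, hw, hadj⟩ := hS.2 _ hy
    obtain ⟨w', hw', hadj'⟩ := hS.2 _ hz
    -- neighbours of y k : x (k+1) or z k
    have hx1 : ∃ j : Fin (n+1), Sum.inl j ∈ S ∧ (j:ℕ) = (k:ℕ)+1 := by
      rcases w with j | l | l
      · exact ⟨j, hw, (adj_xy j k).1 hadj.symm⟩
      · exact absurd hadj (adj_yy k l)
      · rw [adj_yz] at hadj; subst hadj; exact absurd hw hz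
    have hx0 : ∃ j : Fin (n+1), Sum.inl j ∈ S ∧ (j:ℕ) = (k:ℕ) := by
      rcases w' with j | l | l
      · exact ⟨j, hw', (adj_xz j k).1 hadj'.symm⟩
      · rw [(orthoSq n).adj_comm, adj_yz] at hadj'; subst hadj'; exact absurd hw' hy
      · exact absurd hadj' (adj_zz k l)
    obtain ⟨j1, hj1, e1⟩ := hx1
    obtain ⟨j0, hj0, e0⟩ := hx0
    exact hS.1 _ hj0 _ hj1 ((adj_xx j0 j1).2 (Or.inl (by omega)))

lemma x_forward {i : Fin (n+1)} (hx : Sum.inl i ∈ S) :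
    (∀ h : (i:ℕ) < n, Sum.inr (Sum.inl ⟨(i:ℕ), h⟩) ∈ S) ∧
    (∀ _ : 0 < (i:ℕ), ∀ h' : (i:ℕ)-1 < n, Sum.inr (Sum.inl ⟨(i:ℕ)-1, h'⟩) ∉ S) := by
  constructor
  · intro h
    have hz : Sum.inr (Sum.inr (⟨(i:ℕ), h⟩ : Fin n)) ∉ S := by
      intro hz
      exact hS.1 _ hx _ hz ((adj_xz i ⟨(i:ℕ), h⟩).2 rfl)
    rw [z_mem_iff hS] at hz
    exact not_not.mp hz
  · intro h0 h' hy
    exact hS.1 _ hx _ hy ((adj_xy i ⟨(i:ℕ)-1, h'⟩).2 (by simp; omega))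

/-- the bit pattern of `S`. -/
def pat (S : Finset (V n)) : Fin n → Bool := fun k => decide (Sum.inr (Sum.inl k) ∈ S)

omit hS in
lemma ext_pat {m : ℕ} (h : m < n) :
    ext (pat S) m = true ↔ Sum.inr (Sum.inl (⟨m, h⟩ : Fin n)) ∈ S := by
  rw [ext_eq _ h]; simp [pat]


omit hS in
lemma ext_pat' {m : ℕ} (h : m < n) :
    ext (pat S) m = false ↔ Sum.inr (Sum.inl (⟨m, h⟩ : Fin n)) ∉ S := by
  rw [ext_eq _ h]; simp [pat]

lemma x_mem_iff (i : Fin (n+1)) :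
    Sum.inl i ∈ S ↔
      ((i:ℕ) = n ∨ ext (pat S) i = true) ∧ ((i:ℕ) = 0 ∨ ext (pat S) ((i:ℕ)-1) = false) := by
  constructor
  · intro hx
    obtain ⟨h1, h2⟩ := x_forward hS hx
    constructor
    · rcases Nat.lt_or_ge (i:ℕ) n with h | h
      · exact Or.inr ((ext_pat h).2 (h1 h))
      · exact Or.inl (by have := i.isLt; omega)
    · rcases Nat.eq_zero_or_pos (i:ℕ) with h | h
      · exact Or.inl h
      · have h' : (i:ℕ)-1 < n := by have := i.isLt; omega
        exact Or.inr ((ext_pat' h').2 (h2 h h'))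
  · intro hcond
    by_contra hx
    obtain ⟨w, hw, hadj⟩ := hS.2 _ hx
    rcases w with j | l | l
    · rw [adj_xx] at hadj
      obtain ⟨hj1, hj2⟩ := x_forward hS hw
      rcases hadj with h | h
      · -- j = i + 1, so y i ∉ S
        have h0 : 0 < (j:ℕ) := by omega
        have h' : (j:ℕ)-1 < n := by have := j.isLt; omega
        have hyno := hj2 h0 h'
        have hin : (i:ℕ) < n := by omega
        rcases hcond.1 with hc | hc
        · omega
        · rw [ext_pat hin] at hc
          have : (⟨(i:ℕ), hin⟩ : Fin n) = ⟨(j:ℕ)-1, h'⟩ := by simp only [Fin.ext_iff, Fin.val_mk]; omega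
          rw [this] at hc
          exact hyno hc
      · -- j + 1 = i, so y j ∈ S
        have hjn : (j:ℕ) < n := by have := i.isLt; omega
        have hy := hj1 hjn
        rcases hcond.2 with hc | hc
        · omega
        · have h' : (i:ℕ)-1 < n := by omega
          rw [ext_pat' h'] at hc
          have : (⟨(j:ℕ), hjn⟩ : Fin n) = ⟨(i:ℕ)-1, h'⟩ := by simp only [Fin.ext_iff, Fin.val_mk]; omega
          rw [this] at hy
          exact hc hy
    · rw [adj_xy] at hadj
      rcases hcond.2 with hc | hc
      · omega
      · have h' : (i:ℕ)-1 < n := by omega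
        rw [ext_pat' h'] at hc
        have : (⟨(i:ℕ)-1, h'⟩ : Fin n) = l := by simp only [Fin.ext_iff, Fin.val_mk]; omega
        rw [this] at hc
        exact hc hw
    · rw [adj_xz] at hadj
      have hlin : (i:ℕ) < n := by rw [hadj]; exact l.isLt
      rcases hcond.1 with hc | hc
      · omega
      · rw [ext_pat hlin] at hc
        have : (⟨(i:ℕ), hlin⟩ : Fin n) = l := by simp only [Fin.ext_iff, Fin.val_mk]; omega
        rw [this] at hc
        exact (z_mem_iff hS l).1 hw hc

lemma S_eq_Sset : S = Sset (pat S) := by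
  ext v
  rcases v with i | k | k
  · rw [mem_Sset_x, x_mem_iff hS]
  · rw [mem_Sset_y]; simp [pat]
  · rw [mem_Sset_z, z_mem_iff hS]; simp [pat]

end Converse

/-- Independent dominating sets of `orthoSq n` biject with `Fin n → Bool`. -/
def idsEquiv (n : ℕ) : (Fin n → Bool) ≃ {S : Finset (V n) // IsIndepDomSet (orthoSq n) S} where
  toFun b := ⟨Sset b, isIDS_Sset b⟩
  invFun P := pat P.1
  left_inv b := by
    funext k
    simp [pat, mem_Sset_y]
  right_inv P := Subtype.ext (S_eq_Sset P.2).symm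

end OrthoAux

/-- For every `n ≥ 1`, the number of independent dominating sets of the ortho-chain
square cactus `S n` equals `2 ^ n`. -/
theorem numIDSOrthoSq_eq_pow (n : ℕ) (hn : 1 ≤ n) :
    numIDSOrthoSq n = 2 ^ n := by
  rw [numIDSOrthoSq, ← Nat.card_congr (OrthoAux.idsEquiv n)]
  simp [Nat.card_eq_fintype_card]
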